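/- Let X be an A-correspondence, Y a B-correspondence, R an A-B correspondence, and S a B-A correspondence with X ≅ R ⊗_B S and Y ≅ S ⊗_A R. Let I = span⟨X,X⟩ ⊴ A and J = span⟨Y,Y⟩ ⊴ B. Then IR ⊆ RJ and JS ⊆ SI. -/

import Mathlib

/-! Basic framework: C*-correspondences over (possibly non-unital) C*-algebras,
interior tensor products (characterized by their universal properties),
closed ideals, and unitary isomorphisms of correspondences. -/

noncomputable section

/-- A (non-degenerate) A–B C*-correspondence: a right Hilbert `B`-module `X`
together with a left action of `A` by adjointable operators. -/
structure Corr (A B : Type) [NonUnitalCStarAlgebra A] [NonUnitalCStarAlgebra B] : Type 1 where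
  X : Type
  [grp : NormedAddCommGroup X]
  [nsc : NormedSpace ℂ X]
  [cpl : CompleteSpace X]
  /-- the right action of `B` -/
  sm : X → B → X
  /-- the `B`-valued inner product (linear in the second variable) -/
  ip : X → X → B
  /-- the left action of `A` -/
  φ : A → X → X
  sm_add : ∀ x y b, sm (x + y) b = sm x b + sm y b
  sm_add' : ∀ x b c, sm x (b + c) = sm x b + sm x c
  sm_mul : ∀ x b c, sm (sm x b) c = sm x (b * c)
  sm_smul : ∀ (t : ℂ) x b, sm (t • x) b = t • sm x b
  sm_smul' : ∀ (t : ℂ) x b, sm x (t • b) = t • sm x b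
  ip_add : ∀ x y z, ip x (y + z) = ip x y + ip x z
  ip_smul : ∀ (t : ℂ) x y, ip x (t • y) = t • ip x y
  ip_sm : ∀ x y b, ip x (sm y b) = ip x y * b
  ip_star : ∀ x y, star (ip x y) = ip y x
  ip_pos : ∀ x, ∃ b, ip x x = star b * b
  ip_norm : ∀ x, ‖x‖ ^ 2 = ‖ip x x‖
  φ_add : ∀ a x y, φ a (x + y) = φ a x + φ a y
  φ_add' : ∀ a b x, φ (a + b) x = φ a x + φ b x
  φ_smul : ∀ a (t : ℂ) x, φ a (t • x) = t • φ a x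
  φ_smul' : ∀ (t : ℂ) a x, φ (t • a) x = t • φ a x
  φ_mul : ∀ a b x, φ (a * b) x = φ a (φ b x)
  φ_adj : ∀ a x y, ip (φ a x) y = ip x (φ (star a) y)
  /-- non-degeneracy of the left action -/
  nondeg : closure (Submodule.span ℂ {z | ∃ a x, z = φ a x} : Set X) = Set.univ

attribute [instance] Corr.grp Corr.nsc Corr.cpl

variable {A B C : Type} [NonUnitalCStarAlgebra A] [NonUnitalCStarAlgebra B]
  [NonUnitalCStarAlgebra C]

/-- `Z.setR I` is the closed submodule `Z·I` of `Z`. -/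
def Corr.setR (Z : Corr A B) (I : Set B) : Set Z.X :=
  closure (Submodule.span ℂ {x | ∃ ξ b, b ∈ I ∧ x = Z.sm ξ b} : Set Z.X)

/-- `Z.setL I` is the closed subspace `I·Z` of `Z`. -/
def Corr.setL (Z : Corr A B) (I : Set A) : Set Z.X :=
  closure (Submodule.span ℂ {x | ∃ a ξ, a ∈ I ∧ x = Z.φ a ξ} : Set Z.X)

/-- `Z⁻¹(I) = {a ∈ A : φ_Z(a)Z ⊆ ZI}`. -/
def Corr.inv (Z : Corr A B) (I : Set B) : Set A := {a | ∀ ξ, Z.φ a ξ ∈ Z.setR I}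

/-- The closed ideal of `B` generated by the inner products of `Z`. -/
def Corr.ipSet (Z : Corr A B) : Set B :=
  closure (Submodule.span ℂ {b | ∃ x y, b = Z.ip x y} : Set B)

/-- A generalized compact operator on the underlying Hilbert module of a correspondence:
one that is approximable in operator norm by finite sums of "rank one" operators
`θ_{ξ,η} : z ↦ ξ·⟨η,z⟩`. -/
def Corr.IsCompactOp (Z : Corr A B) (f : Z.X → Z.X) : Prop :=
  ∀ ε > (0 : ℝ), ∃ (n : ℕ) (ξ η : Fin n → Z.X),
    ∀ z, ‖f z - ∑ i, Z.sm (ξ i) (Z.ip (η i) z)‖ ≤ ε * ‖z‖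

/-- A closed (two-sided, automatically self-adjoint) ideal of a C*-algebra, as a set. -/
structure IsCIdeal {B : Type} [NonUnitalCStarAlgebra B] (I : Set B) : Prop where
  isClosed : IsClosed I
  zero_mem : (0 : B) ∈ I
  add_mem : ∀ x y, x ∈ I → y ∈ I → x + y ∈ I
  smul_mem : ∀ (t : ℂ) x, x ∈ I → t • x ∈ I
  mul_left_mem : ∀ b x, x ∈ I → b * x ∈ I
  mul_right_mem : ∀ b x, x ∈ I → x * b ∈ I

/-- `t : Z₁ × Z₂ → T` exhibits `T` as the interior tensor product `Z₁ ⊗_B Z₂`. -/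
structure IsTensor (Z₁ : Corr A B) (Z₂ : Corr B C) (T : Corr A C)
    (t : Z₁.X → Z₂.X → T.X) : Prop where
  add_left : ∀ x x' y, t (x + x') y = t x y + t x' y
  add_right : ∀ x y y', t x (y + y') = t x y + t x y'
  smul_left : ∀ (c : ℂ) x y, t (c • x) y = c • t x y
  balanced : ∀ x b y, t (Z₁.sm x b) y = t x (Z₂.φ b y)
  sm_right : ∀ x y c, t x (Z₂.sm y c) = T.sm (t x y) c
  act_left : ∀ a x y, T.φ a (t x y) = t (Z₁.φ a x) y
  inner : ∀ x x' y y', T.ip (t x y) (t x' y') = Z₂.ip y (Z₂.φ (Z₁.ip x x') y')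
  dense : closure (Submodule.span ℂ {z | ∃ x y, z = t x y} : Set T.X) = Set.univ

/-- `X ≅ Z₁ ⊗ Z₂` (unitary isomorphism with the interior tensor product). -/
def IsTensorProd (Z₁ : Corr A B) (Z₂ : Corr B C) (T : Corr A C) : Prop :=
  ∃ t, IsTensor Z₁ Z₂ T t

/-- A unitary isomorphism of A–B correspondences. -/
def CorrIso (Z W : Corr A B) : Prop :=
  ∃ u : Z.X → W.X, Function.Surjective u ∧ (∀ x y, u (x + y) = u x + u y) ∧
    (∀ (c : ℂ) x, u (c • x) = c • u x) ∧ (∀ a x, u (Z.φ a x) = W.φ a (u x)) ∧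
    (∀ x b, u (Z.sm x b) = W.sm (u x) b) ∧ (∀ x y, W.ip (u x) (u y) = Z.ip x y)

end

noncomputable section Aux

open Unitization

namespace Corr

variable {A B : Type} [NonUnitalCStarAlgebra A] [NonUnitalCStarAlgebra B] (Z : Corr A B)

lemma ip_zero (x : Z.X) : Z.ip x 0 = 0 := by
  have h := Z.ip_smul 0 x 0
  simpa using h

lemma zero_ip (x : Z.X) : Z.ip 0 x = 0 := by
  rw [← Z.ip_star x 0, ip_zero, star_zero]

lemma ip_add₁ (x y z : Z.X) : Z.ip (x + y) z = Z.ip x z + Z.ip y z := by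
  rw [← Z.ip_star z (x + y), Z.ip_add, star_add, Z.ip_star, Z.ip_star]

lemma ip_smul₁ (t : ℂ) (x y : Z.X) : Z.ip (t • x) y = star t • Z.ip x y := by
  rw [← Z.ip_star y (t • x), Z.ip_smul, star_smul, Z.ip_star]

lemma ip_neg₂ (x y : Z.X) : Z.ip x (-y) = -Z.ip x y := by
  have := Z.ip_smul (-1) x y; simpa using this

lemma ip_sub₂ (x y z : Z.X) : Z.ip x (y - z) = Z.ip x y - Z.ip x z := by
  rw [sub_eq_add_neg, Z.ip_add, ip_neg₂, sub_eq_add_neg]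

lemma ip_sub₁ (x y z : Z.X) : Z.ip (x - y) z = Z.ip x z - Z.ip y z := by
  rw [← Z.ip_star z (x - y), ip_sub₂, star_sub, Z.ip_star, Z.ip_star]

lemma ip_self_selfAdjoint (x : Z.X) : IsSelfAdjoint (Z.ip x x) := Z.ip_star x x

lemma sm_zero (x : Z.X) : Z.sm x 0 = 0 := by
  have h := Z.sm_smul' 0 x 0; simpa using h

lemma zero_sm (b : B) : Z.sm 0 b = 0 := by
  have h := Z.sm_smul 0 0 b; simpa using h

lemma sm_sub' (x : Z.X) (b c : B) : Z.sm x (b - c) = Z.sm x b - Z.sm x c := by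
  have hneg : Z.sm x (-c) = -Z.sm x c := by
    have := Z.sm_smul' (-1) x c; simpa using this
  rw [sub_eq_add_neg, Z.sm_add', hneg, sub_eq_add_neg]

lemma φ_zero (a : A) : Z.φ a 0 = 0 := by
  have h := Z.φ_smul a 0 0; simpa using h

lemma φ_zero' (x : Z.X) : Z.φ 0 x = 0 := by
  have h := Z.φ_smul' 0 0 x; simpa using h

lemma φ_sub' (a b : A) (x : Z.X) : Z.φ (a - b) x = Z.φ a x - Z.φ b x := by
  have hneg : Z.φ (-b) x = -Z.φ b x := by
    have := Z.φ_smul' (-1) b x; simpa using this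
  rw [sub_eq_add_neg, Z.φ_add', hneg, sub_eq_add_neg]

lemma ip_sm₁ (x y : Z.X) (b : B) : Z.ip (Z.sm x b) y = star b * Z.ip x y := by
  rw [← Z.ip_star y (Z.sm x b), Z.ip_sm, star_mul, Z.ip_star]

/-- the norm of `ip x x` -/
lemma norm_ip_self (x : Z.X) : ‖Z.ip x x‖ = ‖x‖ ^ 2 := (Z.ip_norm x).symm

/-- `ip x x` is nonneg in the unitization. -/
lemma ip_self_nonneg_inr (x : Z.X) :
    letI := CStarAlgebra.spectralOrder (Unitization ℂ B)
    letI := CStarAlgebra.spectralOrderedRing (Unitization ℂ B)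
    (0 : Unitization ℂ B) ≤ (Z.ip x x : Unitization ℂ B) := by
  letI := CStarAlgebra.spectralOrder (Unitization ℂ B)
  letI := CStarAlgebra.spectralOrderedRing (Unitization ℂ B)
  obtain ⟨b, hb⟩ := Z.ip_pos x
  rw [hb, Unitization.inr_mul, Unitization.inr_star]
  exact star_mul_self_nonneg _

/-- scaled star-mul-self is nonneg -/
lemma _root_.smul_star_mul_self_nonneg' {C : Type} [CStarAlgebra C]
    [PartialOrder C] [StarOrderedRing C] (c : ℝ) (hc : 0 ≤ c) (K : C) :
    0 ≤ c • (star K * K) := by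
  have : c • (star K * K) = star ((Real.sqrt c : ℂ) • K) * ((Real.sqrt c : ℂ) • K) := by
    rw [star_smul, smul_mul_assoc, mul_smul_comm, smul_smul]
    rw [show star ((Real.sqrt c : ℝ) : ℂ) * ((Real.sqrt c : ℝ) : ℂ)
        = (((Real.sqrt c * Real.sqrt c : ℝ)) : ℂ) by
      rw [Complex.star_def, Complex.conj_ofReal]; push_cast; ring]
    rw [Real.mul_self_sqrt hc, Complex.coe_smul]
  rw [this]
  exact star_mul_self_nonneg _

/-- Cauchy–Schwarz -/
lemma norm_ip_le (x y : Z.X) : ‖Z.ip x y‖ ≤ ‖x‖ * ‖y‖ := by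
  letI := CStarAlgebra.spectralOrder (Unitization ℂ B)
  letI := CStarAlgebra.spectralOrderedRing (Unitization ℂ B)
  by_cases hx : x = 0
  · simp [hx, Z.zero_ip]
  have hxn : (0:ℝ) < ‖x‖ := norm_pos_iff.mpr hx
  have hxpos : (0:ℝ) < ‖x‖ ^ 2 := by positivity
  let ι : B →⋆ₙₐ[ℂ] Unitization ℂ B := Unitization.inrNonUnitalStarAlgHom ℂ B
  have ι_apply : ∀ b : B, ι b = (b : Unitization ℂ B) := fun _ => rfl
  set t : ℝ := (‖x‖ ^ 2)⁻¹ with ht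
  have htpos : 0 < t := by positivity
  let k : B := Z.ip x y
  let b : B := (t : ℂ) • k
  let w : Z.X := Z.sm x b - y
  let K : Unitization ℂ B := ι k
  let H : Unitization ℂ B := ι (Z.ip x x)
  let G : Unitization ℂ B := ι (Z.ip y y)
  let Bu : Unitization ℂ B := ι b
  have expand : Z.ip w w =
      star b * Z.ip x x * b - star b * k - star k * b + Z.ip y y := by
    have e1 : Z.ip (Z.sm x b) (Z.sm x b) = star b * Z.ip x x * b := by
      rw [Z.ip_sm, ip_sm₁, mul_assoc]
    have e2 : Z.ip (Z.sm x b) y = star b * k := by rw [ip_sm₁]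
    have e3 : Z.ip y (Z.sm x b) = star k * b := by
      rw [Z.ip_sm, ← Z.ip_star x y]
    show Z.ip (Z.sm x b - y) (Z.sm x b - y) = _
    rw [ip_sub₁, ip_sub₂, ip_sub₂, e1, e2, e3]
    abel
  have key : (0 : Unitization ℂ B) ≤ star Bu * H * Bu - star Bu * K - star K * Bu + G := by
    have h0 := Z.ip_self_nonneg_inr w
    have : (Z.ip w w : Unitization ℂ B) =
        star Bu * H * Bu - star Bu * K - star K * Bu + G := by
      rw [← ι_apply]
      rw [expand]
      simp only [map_add, map_sub, map_mul, map_star]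
      rfl
    rw [this] at h0
    exact h0
  have hHsa : IsSelfAdjoint H := by
    have : star H = H := by
      rw [← map_star]
      rw [Z.ip_star]
    exact this
  have hnormH : ‖H‖ = ‖x‖ ^ 2 := by
    show ‖((Z.ip x x : B) : Unitization ℂ B)‖ = _
    rw [Unitization.norm_inr, Z.norm_ip_self]
  have conj_le : star Bu * H * Bu ≤ ‖x‖ ^ 2 • (star Bu * Bu) := by
    have := CStarAlgebra.star_left_conjugate_le_norm_smul (a := Bu) (b := H) hHsa
    rwa [hnormH] at this
  have hBu : Bu = (t : ℂ) • K := by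
    show ι ((t:ℂ) • k) = (t:ℂ) • ι k
    rw [map_smul]
  have hsBuBu : star Bu * Bu = ((t*t : ℝ)) • (star K * K) := by
    rw [hBu, star_smul, smul_mul_assoc, mul_smul_comm, smul_smul]
    rw [show star ((t:ℝ):ℂ) * ((t:ℝ):ℂ) = (((t*t:ℝ)):ℂ) by
      rw [Complex.star_def, Complex.conj_ofReal]; push_cast; ring]
    rw [Complex.coe_smul]
  have hsBuK : star Bu * K = t • (star K * K) := by
    rw [hBu, star_smul, smul_mul_assoc]
    rw [show star ((t:ℝ):ℂ) = ((t:ℝ):ℂ) by rw [Complex.star_def, Complex.conj_ofReal]]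
    rw [Complex.coe_smul]
  have hsKBu : star K * Bu = t • (star K * K) := by
    rw [hBu, mul_smul_comm, Complex.coe_smul]
  have key2 : (0 : Unitization ℂ B) ≤ (-t) • (star K * K) + G := by
    have step1 : star Bu * H * Bu - star Bu * K - star K * Bu + G ≤
        ‖x‖^2 • (star Bu * Bu) - star Bu * K - star K * Bu + G := by
      have h1 : star Bu * H * Bu + (- (star Bu * K) - star K * Bu + G) ≤
          ‖x‖^2 • (star Bu * Bu) + (- (star Bu * K) - star K * Bu + G) :=
        add_le_add_left conj_le _
      calc star Bu * H * Bu - star Bu * K - star K * Bu + G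
          = star Bu * H * Bu + (- (star Bu * K) - star K * Bu + G) := by abel
        _ ≤ ‖x‖^2 • (star Bu * Bu) + (- (star Bu * K) - star K * Bu + G) := h1
        _ = ‖x‖^2 • (star Bu * Bu) - star Bu * K - star K * Bu + G := by abel
    have step2 : ‖x‖^2 • (star Bu * Bu) - star Bu * K - star K * Bu + G =
        (-t) • (star K * K) + G := by
      rw [hsBuBu, hsBuK, hsKBu, smul_smul]
      have hcoef : ‖x‖^2 * (t*t) = t := by
        rw [ht]; field_simp
      rw [hcoef]
      rw [show t • (star K * K) - t • (star K * K) - t • (star K * K)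
          = (-t) • (star K * K) by rw [neg_smul]; abel]
    exact key.trans (step1.trans_eq step2)
  have key3 : t • (star K * K) ≤ G := by
    have := key2
    rw [neg_smul] at this
    calc t • (star K * K) = t • (star K * K) + 0 := by abel
      _ ≤ t • (star K * K) + (-(t • (star K * K)) + G) := add_le_add_right this _
      _ = G := by abel
  have hnonneg : (0 : Unitization ℂ B) ≤ t • (star K * K) :=
    smul_star_mul_self_nonneg' t htpos.le K
  have hnorm1 : ‖t • (star K * K)‖ ≤ ‖G‖ :=
    CStarAlgebra.norm_le_norm_of_nonneg_of_le hnonneg key3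
  have hKnorm : ‖K‖ = ‖Z.ip x y‖ := by
    show ‖((k : B) : Unitization ℂ B)‖ = _
    rw [Unitization.norm_inr]
  have hGnorm : ‖G‖ = ‖y‖ ^ 2 := by
    show ‖((Z.ip y y : B) : Unitization ℂ B)‖ = _
    rw [Unitization.norm_inr, Z.norm_ip_self]
  have : t * ‖Z.ip x y‖^2 ≤ ‖y‖^2 := by
    have hns : ‖t • (star K * K)‖ = t * ‖K‖^2 := by
      rw [norm_smul, Real.norm_of_nonneg htpos.le, CStarRing.norm_star_mul_self, sq]
    rw [hns, hKnorm, sq] at hnorm1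
    rw [hGnorm] at hnorm1
    rw [sq]
    exact hnorm1
  have hfin : ‖Z.ip x y‖^2 ≤ (‖x‖ * ‖y‖)^2 := by
    have h2 : ‖Z.ip x y‖^2 ≤ ‖x‖^2 * ‖y‖^2 := by
      have := mul_le_mul_of_nonneg_left this (le_of_lt hxpos)
      rw [← mul_assoc, ht] at this
      field_simp at this
      calc ‖Z.ip x y‖^2 = ‖Z.ip x y‖^2 * 1 := by ring
        _ ≤ ‖y‖^2 * ‖x‖^2 := by
            nlinarith [this]
        _ = ‖x‖^2 * ‖y‖^2 := by ring
    calc ‖Z.ip x y‖^2 ≤ ‖x‖^2 * ‖y‖^2 := h2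
      _ = (‖x‖ * ‖y‖)^2 := by ring
  nlinarith [norm_nonneg (Z.ip x y), mul_nonneg (norm_nonneg x) (norm_nonneg y), hfin]

lemma norm_sm_le (x : Z.X) (b : B) : ‖Z.sm x b‖ ≤ ‖x‖ * ‖b‖ := by
  have h1 : Z.ip (Z.sm x b) (Z.sm x b) = star b * Z.ip x x * b := by
    rw [Z.ip_sm, ip_sm₁, mul_assoc]
  have h2 : ‖Z.sm x b‖^2 = ‖star b * Z.ip x x * b‖ := by
    rw [← h1, ← Z.ip_norm]
  have h3 : ‖star b * Z.ip x x * b‖ ≤ ‖b‖ * (‖x‖^2 * ‖b‖) := by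
    calc ‖star b * Z.ip x x * b‖ ≤ ‖star b * Z.ip x x‖ * ‖b‖ := norm_mul_le _ _
      _ ≤ (‖star b‖ * ‖Z.ip x x‖) * ‖b‖ := by
          exact mul_le_mul_of_nonneg_right (norm_mul_le _ _) (norm_nonneg b)
      _ = ‖b‖ * (‖x‖^2 * ‖b‖) := by rw [norm_star, Z.norm_ip_self]; ring
  have h4 : ‖Z.sm x b‖^2 ≤ (‖x‖ * ‖b‖)^2 := by
    rw [h2]; calc ‖star b * Z.ip x x * b‖ ≤ ‖b‖ * (‖x‖^2 * ‖b‖) := h3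
      _ = (‖x‖ * ‖b‖)^2 := by ring
  exact le_of_pow_le_pow_left₀ two_ne_zero (mul_nonneg (norm_nonneg x) (norm_nonneg b)) h4

/-- quasispectrum of `star a * a` lies in `[0, ‖star a * a‖]`. -/
lemma _root_.quasispectrum_star_mul_self_mem {A : Type} [NonUnitalCStarAlgebra A] (a : A) :
    quasispectrum ℝ (star a * a) ⊆ Set.Icc 0 ‖star a * a‖ := by
  intro s hs
  rw [Unitization.quasispectrum_eq_spectrum_inr' ℝ ℂ] at hs
  have hinr : ((star a * a : A) : Unitization ℂ A)
      = star ((a : A) : Unitization ℂ A) * ((a : A) : Unitization ℂ A) := by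
    simp [Unitization.inr_mul, Unitization.inr_star]
  constructor
  · rw [hinr] at hs
    exact spectrum_star_mul_self_nonneg s hs
  · have := spectrum.norm_le_norm_of_mem hs
    rw [Unitization.norm_inr] at this
    exact (Real.le_norm_self s).trans this

lemma _root_.cstar_norm_smul_sub_sq {A : Type} [NonUnitalCStarAlgebra A] (a : A) :
    ∃ e : A, ‖star a * a‖ • (star a * a) - (star a * a) * (star a * a) = star e * e := by
  set c := star a * a with hc
  have hsa : IsSelfAdjoint c := IsSelfAdjoint.star_mul_self a
  have hq := quasispectrum_star_mul_self_mem a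
  rw [← hc] at hq
  have hgcont : ContinuousOn (fun t : ℝ => ‖c‖ * t - t * t) (quasispectrum ℝ c) := by fun_prop
  refine ⟨cfcₙ (fun t => Real.sqrt (‖c‖ * t - t * t)) c, ?_⟩
  have hsqrt_cont : ContinuousOn (fun t : ℝ => Real.sqrt (‖c‖ * t - t * t)) (quasispectrum ℝ c) := by
    fun_prop
  have hsqrt0 : Real.sqrt (‖c‖ * 0 - 0 * 0) = 0 := by simp
  have hstar : IsSelfAdjoint (cfcₙ (fun t : ℝ => Real.sqrt (‖c‖ * t - t * t)) c) :=
    cfcₙ_predicate _ c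
  rw [hstar.star_eq]
  have hmul := cfcₙ_mul (fun t : ℝ => Real.sqrt (‖c‖ * t - t * t))
    (fun t : ℝ => Real.sqrt (‖c‖ * t - t * t)) c hsqrt_cont hsqrt0 hsqrt_cont hsqrt0
  rw [← hmul]
  have hcongr : cfcₙ (fun t : ℝ => Real.sqrt (‖c‖ * t - t * t) * Real.sqrt (‖c‖ * t - t * t)) c
      = cfcₙ (fun t : ℝ => ‖c‖ * t - t * t) c := by
    apply cfcₙ_congr
    intro s hs
    have hmem := hq hs
    have hginner : (0:ℝ) ≤ ‖c‖ * s - s * s := by nlinarith [hmem.1, hmem.2]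
    simp only []
    rw [Real.mul_self_sqrt hginner]
  rw [hcongr]
  have h1 : cfcₙ (fun t : ℝ => ‖c‖ * t) c = ‖c‖ • c := by
    have hs := cfcₙ_smul (R := ℝ) ‖c‖ (id : ℝ → ℝ) c
    simp only [smul_eq_mul, id] at hs
    rw [hs, cfcₙ_id ℝ c]
  have h2 : cfcₙ (fun t : ℝ => t * t) c = c * c := by
    have hm := cfcₙ_mul (id : ℝ → ℝ) (id : ℝ → ℝ) c (by fun_prop) rfl (by fun_prop) rfl
    simp only [id] at hm
    rw [hm, cfcₙ_id ℝ c]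
  have hsub := cfcₙ_sub (fun t : ℝ => ‖c‖ * t) (fun t : ℝ => t * t) c
    (by fun_prop) (by simp) (by fun_prop) (by simp)
  rw [hsub, h1, h2]

/-- nonnegativity of `ip x (φ (star e * e) x)` in the unitization. -/
lemma ip_φ_star_mul_self_nonneg (e : A) (x : Z.X) :
    letI := CStarAlgebra.spectralOrder (Unitization ℂ B)
    letI := CStarAlgebra.spectralOrderedRing (Unitization ℂ B)
    (0 : Unitization ℂ B) ≤ (Z.ip x (Z.φ (star e * e) x) : Unitization ℂ B) := by
  letI := CStarAlgebra.spectralOrder (Unitization ℂ B)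
  letI := CStarAlgebra.spectralOrderedRing (Unitization ℂ B)
  have h1 : Z.ip x (Z.φ (star e * e) x) = Z.ip (Z.φ e x) (Z.φ e x) := by
    rw [Z.φ_mul, ← Z.φ_adj]
  rw [h1]
  exact Z.ip_self_nonneg_inr _

/-- the key special case: `‖φ c x‖ ≤ ‖c‖ ‖x‖` for `c = star a * a`. -/
lemma norm_φ_star_mul_self_le (a : A) (x : Z.X) :
    ‖Z.φ (star a * a) x‖ ≤ ‖star a * a‖ * ‖x‖ := by
  letI := CStarAlgebra.spectralOrder (Unitization ℂ B)
  letI := CStarAlgebra.spectralOrderedRing (Unitization ℂ B)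
  set c := star a * a with hc
  have hcsa : star c = c := IsSelfAdjoint.star_mul_self a
  set u := Z.φ c x with hu
  have h1 : Z.ip u u = Z.ip x (Z.φ (c * c) x) := by
    rw [hu, Z.φ_adj, ← Z.φ_mul, hcsa]
  obtain ⟨e, he⟩ := cstar_norm_smul_sub_sq a
  rw [← hc] at he
  have h3 : Z.ip x (Z.φ (‖c‖ • c - c * c) x) =
      ‖c‖ • Z.ip x (Z.φ c x) - Z.ip x (Z.φ (c * c) x) := by
    rw [φ_sub', ip_sub₂]
    congr 1
    have : (‖c‖ • c : A) = ((‖c‖ : ℝ) : ℂ) • c := by rw [Complex.coe_smul]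
    rw [this, Z.φ_smul', Z.ip_smul, Complex.coe_smul]
  have h4 : (0 : Unitization ℂ B) ≤ (Z.ip x (Z.φ (‖c‖ • c - c * c) x) : Unitization ℂ B) := by
    rw [he]
    exact Z.ip_φ_star_mul_self_nonneg e x
  have h5 : (0 : Unitization ℂ B) ≤ (Z.ip x (Z.φ (c * c) x) : Unitization ℂ B) := by
    rw [← h1]
    exact Z.ip_self_nonneg_inr u
  have h6 : (Z.ip x (Z.φ (c * c) x) : Unitization ℂ B) ≤
      ‖c‖ • (Z.ip x (Z.φ c x) : Unitization ℂ B) := by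
    have := h4
    rw [h3] at this
    have hpush : ((‖c‖ • Z.ip x (Z.φ c x) - Z.ip x (Z.φ (c * c) x) : B) : Unitization ℂ B) =
        ‖c‖ • (Z.ip x (Z.φ c x) : Unitization ℂ B) - (Z.ip x (Z.φ (c * c) x) : Unitization ℂ B) := by
      rw [Unitization.inr_sub, Unitization.inr_smul]
    rw [hpush] at this
    exact sub_nonneg.mp this
  have h7 : ‖Z.ip x (Z.φ (c * c) x)‖ ≤ ‖c‖ * ‖Z.ip x (Z.φ c x)‖ := by
    have := CStarAlgebra.norm_le_norm_of_nonneg_of_le h5 h6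
    rw [Unitization.norm_inr] at this
    calc ‖Z.ip x (Z.φ (c * c) x)‖ ≤ ‖‖c‖ • (Z.ip x (Z.φ c x) : Unitization ℂ B)‖ := this
      _ = ‖c‖ * ‖Z.ip x (Z.φ c x)‖ := by
          rw [norm_smul, Real.norm_of_nonneg (norm_nonneg c), Unitization.norm_inr]
  have h8 : ‖u‖^2 ≤ ‖c‖ * (‖x‖ * ‖u‖) := by
    calc ‖u‖^2 = ‖Z.ip u u‖ := Z.ip_norm u
      _ = ‖Z.ip x (Z.φ (c * c) x)‖ := by rw [h1]
      _ ≤ ‖c‖ * ‖Z.ip x (Z.φ c x)‖ := h7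
      _ ≤ ‖c‖ * (‖x‖ * ‖u‖) := by
          refine mul_le_mul_of_nonneg_left ?_ (norm_nonneg c)
          rw [← hu]
          exact Z.norm_ip_le x u
  by_cases hu0 : ‖u‖ = 0
  · rw [hu0]; positivity
  · have hupos : 0 < ‖u‖ := lt_of_le_of_ne (norm_nonneg u) (Ne.symm hu0)
    nlinarith [h8]

/-- boundedness of the left action. -/
lemma norm_φ_le (a : A) (x : Z.X) : ‖Z.φ a x‖ ≤ ‖a‖ * ‖x‖ := by
  have h1 : Z.ip (Z.φ a x) (Z.φ a x) = Z.ip x (Z.φ (star a * a) x) := by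
    rw [Z.φ_adj, ← Z.φ_mul]
  have h2 : ‖Z.φ a x‖^2 ≤ ‖x‖ * (‖star a * a‖ * ‖x‖) := by
    calc ‖Z.φ a x‖^2 = ‖Z.ip (Z.φ a x) (Z.φ a x)‖ := Z.ip_norm _
      _ = ‖Z.ip x (Z.φ (star a * a) x)‖ := by rw [h1]
      _ ≤ ‖x‖ * ‖Z.φ (star a * a) x‖ := Z.norm_ip_le _ _
      _ ≤ ‖x‖ * (‖star a * a‖ * ‖x‖) := by
          exact mul_le_mul_of_nonneg_left (Z.norm_φ_star_mul_self_le a x) (norm_nonneg x)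
  rw [CStarRing.norm_star_mul_self] at h2
  have h3 : ‖Z.φ a x‖^2 ≤ (‖a‖ * ‖x‖)^2 := by calc ‖Z.φ a x‖^2 ≤ ‖x‖ * (‖a‖ * ‖a‖ * ‖x‖) := h2
    _ = (‖a‖ * ‖x‖)^2 := by ring
  exact le_of_pow_le_pow_left₀ two_ne_zero (mul_nonneg (norm_nonneg a) (norm_nonneg x)) h3
lemma _root_.real_poly_bound {M t : ℝ} (hM : 0 < M) (n : ℕ) (hn : 1 ≤ n)
    (ht0 : 0 ≤ t) (htM : t ≤ M) : t * ((1 - t/M)^n)^2 ≤ M / n := by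
  set s : ℝ := t / M with hs
  have hs0 : 0 ≤ s := by positivity
  have hs1 : s ≤ 1 := by rw [hs]; exact (div_le_one hM).mpr htM
  have h1s0 : 0 ≤ 1 - s := by linarith
  have hp0 : 0 ≤ (1-s)^n := pow_nonneg h1s0 n
  have hp1 : (1-s)^n ≤ 1 := pow_le_one₀ h1s0 (by linarith)
  have hsq : ((1-s)^n)^2 ≤ (1-s)^n := by nlinarith
  have hbern : 1 + (n:ℝ) * s ≤ (1+s)^n := by
    have := one_add_mul_le_pow (a := s) (by linarith) n
    linarith [this]
  have hprod : (1-s)^n * (1+s)^n ≤ 1 := by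
    rw [← mul_pow]
    exact pow_le_one₀ (by nlinarith) (by nlinarith)
  have hkey : (1-s)^n * (1 + (n:ℝ)*s) ≤ 1 := by
    calc (1-s)^n * (1 + (n:ℝ)*s) ≤ (1-s)^n * (1+s)^n :=
          mul_le_mul_of_nonneg_left hbern hp0
      _ ≤ 1 := hprod
  have hnpos : (0:ℝ) < n := by exact_mod_cast Nat.lt_of_lt_of_le Nat.zero_lt_one hn
  have hts : t = M * s := by rw [hs]; field_simp
  have hfin : t * (1-s)^n ≤ M / n := by
    rw [hts, le_div_iff₀ hnpos]
    have h2 : s * (n:ℝ) * (1-s)^n ≤ 1 := by nlinarith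
    calc M * s * (1-s)^n * n = M * (s * n * (1-s)^n) := by ring
      _ ≤ M * 1 := by nlinarith
      _ = M := by ring
  calc t * ((1-s)^n)^2 ≤ t * (1-s)^n := by nlinarith
    _ ≤ M / n := hfin


/-- approximation lemma: `ξ ∈ closure span {ρ • ⟨ρ', ξ⟩}`. -/
lemma mem_closure_span_sm_ip (ξ : Z.X) :
    ξ ∈ closure (Submodule.span ℂ {w : Z.X | ∃ ρ ρ', w = Z.sm ρ (Z.ip ρ' ξ)} : Set Z.X) := by
  by_cases hξ : ξ = 0
  · subst hξ
    exact subset_closure (Submodule.zero_mem _)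
  set T : Submodule ℂ Z.X :=
    Submodule.span ℂ {w : Z.X | ∃ ρ ρ', w = Z.sm ρ (Z.ip ρ' ξ)} with hT
  set h : B := Z.ip ξ ξ with hh
  have hsa : IsSelfAdjoint h := Z.ip_self_selfAdjoint ξ
  obtain ⟨b₀, hb₀⟩ := Z.ip_pos ξ
  rw [← hh] at hb₀
  set M : ℝ := ‖h‖ with hM
  have hMpos : 0 < M := by
    rw [hM, hh, Z.norm_ip_self]
    have : 0 < ‖ξ‖ := norm_pos_iff.mpr hξ
    positivity
  have hq : quasispectrum ℝ h ⊆ Set.Icc 0 M := by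
    have hq' := quasispectrum_star_mul_self_mem b₀
    rw [← hb₀] at hq'
    exact hq'
  set f : ℕ → ℝ → ℝ := fun n t => 1 - (1 - t * M⁻¹)^n with hf
  have hfc : ∀ n, ContinuousOn (f n) (quasispectrum ℝ h) := by
    intro n; apply Continuous.continuousOn; fun_prop
  have hf0 : ∀ n, f n 0 = 0 := by intro n; simp [hf]
  set u : ℕ → B := fun n => cfcₙ (f n) h with hu
  have husa : ∀ n, IsSelfAdjoint (u n) := fun n => cfcₙ_predicate (f n) h
  -- powers of h
  set hpow : ℕ → B := fun k => Nat.rec h (fun _ p => p * h) k with hhpow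
  have hpowS : ∀ k, hpow (k+1) = hpow k * h := fun k => rfl
  have hcomm : ∀ k, h * hpow k = hpow k * h := by
    intro k
    induction k with
    | zero => rfl
    | succ k ih => rw [hpowS, ← mul_assoc, ih]
  set V : Submodule ℂ B := Submodule.span ℂ {b : B | ∃ k, b = hpow k} with hV
  have hVmul : ∀ b ∈ V, h * b ∈ V := by
    intro b hb
    induction hb using Submodule.span_induction with
    | mem x hx =>
        obtain ⟨k, rfl⟩ := hx
        rw [hcomm k, ← hpowS]
        exact Submodule.subset_span ⟨k+1, rfl⟩
    | zero => rw [mul_zero]; exact V.zero_mem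
    | add x y _ _ hx hy => rw [mul_add]; exact V.add_mem hx hy
    | smul c x _ hx => rw [mul_smul_comm]; exact V.smul_mem c hx
  have hmemh : h ∈ V := Submodule.subset_span ⟨0, rfl⟩
  have hsmulV : ∀ (r : ℝ), ∀ b ∈ V, r • b ∈ V := by
    intro r b hb
    rw [← Complex.coe_smul]
    exact V.smul_mem _ hb
  -- the recurrence
  have hrec : ∀ n, u (n+1) = u n + M⁻¹ • h - M⁻¹ • (h * u n) := by
    intro n
    have hfeq : f (n+1) = fun t => (f n t + M⁻¹ * t) - M⁻¹ * (t * f n t) := by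
      funext t
      simp only [hf, pow_succ]
      ring
    have hcid : ContinuousOn (id : ℝ → ℝ) (quasispectrum ℝ h) := continuousOn_id
    have c1 : ContinuousOn (fun t : ℝ => f n t + M⁻¹ * t) (quasispectrum ℝ h) := by
      apply Continuous.continuousOn; fun_prop
    have c2 : ContinuousOn (fun t : ℝ => t * f n t) (quasispectrum ℝ h) := by
      apply Continuous.continuousOn; fun_prop
    have c3 : ContinuousOn (fun t : ℝ => M⁻¹ * (t * f n t)) (quasispectrum ℝ h) := by
      apply Continuous.continuousOn; fun_prop
    have z1 : f n 0 + M⁻¹ * 0 = 0 := by rw [hf0]; ring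
    have z2 : (0:ℝ) * f n 0 = 0 := by ring
    have z3 : M⁻¹ * (0 * f n 0) = 0 := by ring
    calc u (n+1) = cfcₙ (fun t => (f n t + M⁻¹ * t) - M⁻¹ * (t * f n t)) h := by
          rw [hu]; simp only []; rw [hfeq]
      _ = cfcₙ (fun t => f n t + M⁻¹ * t) h - cfcₙ (fun t => M⁻¹ * (t * f n t)) h :=
          cfcₙ_sub _ _ h c1 z1 c3 z3
      _ = (cfcₙ (f n) h + cfcₙ (fun t : ℝ => M⁻¹ * t) h) - M⁻¹ • cfcₙ (fun t : ℝ => t * f n t) h := by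
          rw [cfcₙ_add (f n) (fun t : ℝ => M⁻¹ * t) h (hfc n) (hf0 n) (by fun_prop) (by simp)]
          congr 1
          have := cfcₙ_smul (R := ℝ) M⁻¹ (fun t : ℝ => t * f n t) h c2 z2
          simp only [smul_eq_mul] at this
          exact this
      _ = u n + M⁻¹ • h - M⁻¹ • (h * u n) := by
          congr 1
          · congr 1
            have := cfcₙ_smul (R := ℝ) M⁻¹ (id : ℝ → ℝ) h hcid rfl
            simp only [smul_eq_mul, id] at this
            rw [this, cfcₙ_id ℝ h]
          · congr 1
            have hm := cfcₙ_mul (id : ℝ → ℝ) (f n) h hcid rfl (hfc n) (hf0 n)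
            simp only [id] at hm
            rw [hm, cfcₙ_id ℝ h]
  have hu0 : u 0 = 0 := by
    have : f 0 = fun _ : ℝ => (0:ℝ) := by funext t; simp [hf]
    rw [hu]; simp only []; rw [this]
    exact cfcₙ_const_zero ℝ h
  have hu_mem : ∀ n, u n ∈ V := by
    intro n
    induction n with
    | zero => rw [hu0]; exact V.zero_mem
    | succ n ih =>
        rw [hrec n]
        exact V.sub_mem (V.add_mem ih (hsmulV _ _ hmemh)) (hsmulV _ _ (hVmul _ ih))
  have hsmT : ∀ b ∈ V, Z.sm ξ b ∈ T := by
    intro b hb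
    induction hb using Submodule.span_induction with
    | mem x hx =>
        obtain ⟨k, rfl⟩ := hx
        match k with
        | 0 => exact Submodule.subset_span ⟨ξ, ξ, rfl⟩
        | Nat.succ k =>
            rw [hpowS, ← Z.sm_mul]
            exact Submodule.subset_span ⟨Z.sm ξ (hpow k), ξ, rfl⟩
    | zero => rw [Z.sm_zero]; exact T.zero_mem
    | add x y _ _ hx hy => rw [Z.sm_add']; exact T.add_mem hx hy
    | smul c x _ hx => rw [Z.sm_smul']; exact T.smul_mem c hx
  -- norm estimate
  have hest : ∀ n, 1 ≤ n → ‖ξ - Z.sm ξ (u n)‖^2 ≤ M / n := by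
    intro n hn
    set w : Z.X := Z.sm ξ (u n) with hw
    have e1 : Z.ip ξ w = h * u n := by rw [hw, Z.ip_sm, ← hh]
    have e2 : Z.ip w ξ = u n * h := by
      rw [hw, ip_sm₁, ← hh, (husa n).star_eq]
    have e3 : Z.ip w w = (u n * h) * u n := by
      rw [hw, Z.ip_sm, ip_sm₁, ← hh, (husa n).star_eq]
    have expand : Z.ip (ξ - w) (ξ - w) = (h - h * u n) - ((u n * h) - (u n * h) * u n) := by
      rw [ip_sub₁, ip_sub₂, ip_sub₂, e1, e2, e3, ← hh]
    have hcid : ContinuousOn (fun t : ℝ => t) (quasispectrum ℝ h) := continuousOn_id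
    have c2 : ContinuousOn (fun t : ℝ => t * f n t) (quasispectrum ℝ h) := by
      apply Continuous.continuousOn; fun_prop
    have c4 : ContinuousOn (fun t : ℝ => f n t * t) (quasispectrum ℝ h) := by
      apply Continuous.continuousOn; fun_prop
    have c5 : ContinuousOn (fun t : ℝ => (f n t * t) * f n t) (quasispectrum ℝ h) := by
      apply Continuous.continuousOn; fun_prop
    have c6 : ContinuousOn (fun t : ℝ => f n t * t - (f n t * t) * f n t) (quasispectrum ℝ h) := by
      apply Continuous.continuousOn; fun_prop
    have c7 : ContinuousOn (fun t : ℝ => t - t * f n t) (quasispectrum ℝ h) := by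
      apply Continuous.continuousOn; fun_prop
    have hm1 : cfcₙ (fun t : ℝ => t * f n t) h = h * u n := by
      have hm := cfcₙ_mul (fun t : ℝ => t) (f n) h hcid rfl (hfc n) (hf0 n)
      rw [hm, cfcₙ_id' ℝ h]
    have hm2 : cfcₙ (fun t : ℝ => f n t * t) h = u n * h := by
      have hm := cfcₙ_mul (f n) (fun t : ℝ => t) h (hfc n) (hf0 n) hcid rfl
      rw [hm, cfcₙ_id' ℝ h]
    have hm3 : cfcₙ (fun t : ℝ => (f n t * t) * f n t) h = (u n * h) * u n := by
      have hm := cfcₙ_mul (fun t : ℝ => f n t * t) (f n) h c4 (by simp [hf]) (hfc n) (hf0 n)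
      rw [hm, hm2]
    have hrep : Z.ip (ξ - w) (ξ - w) =
        cfcₙ (fun t : ℝ => (t - t * f n t) - (f n t * t - (f n t * t) * f n t)) h := by
      rw [cfcₙ_sub _ _ h c7 (by simp [hf]) c6 (by simp [hf])]
      rw [cfcₙ_sub (fun t : ℝ => t) _ h hcid rfl c2 (by simp [hf])]
      rw [cfcₙ_sub _ _ h c4 (by simp [hf]) c5 (by simp [hf])]
      rw [cfcₙ_id' ℝ h, hm1, hm2, hm3, expand]
    have hbound : ‖cfcₙ (fun t : ℝ => (t - t * f n t) - (f n t * t - (f n t * t) * f n t)) h‖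
        ≤ M / n := by
      apply norm_cfcₙ_le
      intro t ht
      have htm := hq ht
      have hgt : (t - t * f n t) - (f n t * t - (f n t * t) * f n t)
          = t * ((1 - t/M)^n)^2 := by
        simp only [hf]
        rw [div_eq_mul_inv]
        ring
      rw [hgt, Real.norm_of_nonneg (mul_nonneg htm.1 (sq_nonneg _))]
      exact real_poly_bound hMpos n hn htm.1 htm.2
    calc ‖ξ - Z.sm ξ (u n)‖^2 = ‖Z.ip (ξ - w) (ξ - w)‖ := by rw [← hw]; exact Z.ip_norm _
      _ ≤ M / n := by rw [hrep]; exact hbound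
  -- conclude
  rw [Metric.mem_closure_iff]
  intro ε hε
  obtain ⟨n₀, hn₀⟩ := exists_nat_gt (M / ε^2)
  set n : ℕ := n₀ + 1 with hn
  have hn1 : 1 ≤ n := Nat.le_add_left 1 n₀
  have hnpos : (0:ℝ) < n := by positivity
  have hlt : M / n < ε^2 := by
    rw [div_lt_iff₀ hnpos]
    have h1 : M / ε^2 < n := by
      calc M / ε^2 < n₀ := hn₀
        _ ≤ n := by exact_mod_cast Nat.le_add_right n₀ 1
    calc M = (M / ε^2) * ε^2 := by field_simp
      _ < n * ε^2 := by
          apply mul_lt_mul_of_pos_right h1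
          positivity
      _ = ε^2 * n := by ring
  refine ⟨Z.sm ξ (u n), hsmT _ (hu_mem n), ?_⟩
  rw [dist_eq_norm]
  have := (hest n hn1).trans_lt hlt
  nlinarith [norm_nonneg (ξ - Z.sm ξ (u n)), hε]

/-- continuity of the inner product in the first variable -/
lemma continuous_ip_left (y0 : Z.X) : Continuous (fun z => Z.ip z y0) := by
  apply LipschitzWith.continuous (K := ‖y0‖₊)
  apply LipschitzWith.of_dist_le_mul
  intro z z'
  rw [dist_eq_norm, dist_eq_norm, ← ip_sub₁]
  calc ‖Z.ip (z - z') y0‖ ≤ ‖z - z'‖ * ‖y0‖ := Z.norm_ip_le _ _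
    _ = ‖y0‖ * ‖z - z'‖ := by ring

/-- continuity of the inner product in the second variable -/
lemma continuous_ip_right (x0 : Z.X) : Continuous (fun z => Z.ip x0 z) := by
  apply LipschitzWith.continuous (K := ‖x0‖₊)
  apply LipschitzWith.of_dist_le_mul
  intro z z'
  rw [dist_eq_norm, dist_eq_norm, ← ip_sub₂]
  exact Z.norm_ip_le _ _

/-- continuity of `a ↦ ⟨x, φ a y⟩` -/
lemma continuous_ip_φ (x y : Z.X) : Continuous (fun a : A => Z.ip x (Z.φ a y)) := by
  apply LipschitzWith.continuous (K := ‖x‖₊ * ‖y‖₊)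
  apply LipschitzWith.of_dist_le_mul
  intro a a'
  rw [dist_eq_norm, dist_eq_norm, ← ip_sub₂, ← φ_sub']
  calc ‖Z.ip x (Z.φ (a - a') y)‖ ≤ ‖x‖ * ‖Z.φ (a - a') y‖ := Z.norm_ip_le _ _
    _ ≤ ‖x‖ * (‖a - a'‖ * ‖y‖) :=
        mul_le_mul_of_nonneg_left (Z.norm_φ_le _ _) (norm_nonneg x)
    _ = ↑(‖x‖₊ * ‖y‖₊) * ‖a - a'‖ := by push_cast; ring

end Corr

section Main

variable {A B : Type} [NonUnitalCStarAlgebra A] [NonUnitalCStarAlgebra B]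

lemma main_step (X : Corr A A) (Y : Corr B B) (R : Corr A B) (S : Corr B A)
    (hX : IsTensorProd R S X) (hY : IsTensorProd S R Y) :
    ∀ a ∈ X.ipSet, ∀ r, R.φ a r ∈ R.setR Y.ipSet := by
  obtain ⟨t, ht⟩ := hX
  obtain ⟨u, hu⟩ := hY
  set SSm : Submodule ℂ A :=
    (Submodule.span ℂ {c : A | ∃ σ σ', c = S.ip σ σ'}).topologicalClosure with hSSm
  set YJm : Submodule ℂ B :=
    (Submodule.span ℂ {b : B | ∃ y y', b = Y.ip y y'}).topologicalClosure with hYJm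
  have hYcoe : (YJm : Set B) = Y.ipSet := by
    rw [hYJm, Submodule.topologicalClosure_coe]
    rfl
  have hSS_closed : IsClosed (SSm : Set A) := Submodule.isClosed_topologicalClosure _
  have hYJ_closed : IsClosed (YJm : Set B) := Submodule.isClosed_topologicalClosure _
  -- Claim A
  have claimA : ∀ (ρ : R.X) (σ : S.X) (x : X.X), X.ip x (t ρ σ) ∈ (SSm : Set A) := by
    intro ρ σ x
    have hCclosed : IsClosed ((fun z => X.ip z (t ρ σ)) ⁻¹' (SSm : Set A)) :=
      hSS_closed.preimage (X.continuous_ip_left (t ρ σ))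
    have hx : x ∈ closure (Submodule.span ℂ {z : X.X | ∃ ρ' σ', z = t ρ' σ'} : Set X.X) := by
      rw [ht.dense]; trivial
    have hsub : (Submodule.span ℂ {z : X.X | ∃ ρ' σ', z = t ρ' σ'} : Set X.X) ⊆
        (fun z => X.ip z (t ρ σ)) ⁻¹' (SSm : Set A) := by
      intro z hz
      induction hz using Submodule.span_induction with
      | mem w hw =>
          obtain ⟨ρ', σ', rfl⟩ := hw
          show X.ip (t ρ' σ') (t ρ σ) ∈ (SSm : Set A)
          rw [ht.inner]
          exact Submodule.le_topologicalClosure _ (Submodule.subset_span ⟨σ', _, rfl⟩)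
      | zero =>
          show X.ip 0 (t ρ σ) ∈ (SSm : Set A)
          rw [X.zero_ip]
          exact SSm.zero_mem
      | add w w' _ _ hw hw' =>
          show X.ip (w + w') (t ρ σ) ∈ (SSm : Set A)
          rw [X.ip_add₁]
          exact SSm.add_mem hw hw'
      | smul c w _ hw =>
          show X.ip (c • w) (t ρ σ) ∈ (SSm : Set A)
          rw [X.ip_smul₁]
          exact SSm.smul_mem _ hw
    exact closure_minimal hsub hCclosed hx
  -- Claim B
  have claimB : ∀ (x y : X.X), X.ip x y ∈ (SSm : Set A) := by
    intro x y
    have hCclosed : IsClosed ((fun z => X.ip x z) ⁻¹' (SSm : Set A)) :=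
      hSS_closed.preimage (X.continuous_ip_right x)
    have hy : y ∈ closure (Submodule.span ℂ {z : X.X | ∃ ρ' σ', z = t ρ' σ'} : Set X.X) := by
      rw [ht.dense]; trivial
    have hsub : (Submodule.span ℂ {z : X.X | ∃ ρ' σ', z = t ρ' σ'} : Set X.X) ⊆
        (fun z => X.ip x z) ⁻¹' (SSm : Set A) := by
      intro z hz
      induction hz using Submodule.span_induction with
      | mem w hw =>
          obtain ⟨ρ', σ', rfl⟩ := hw
          exact claimA ρ' σ' x
      | zero =>
          show X.ip x 0 ∈ (SSm : Set A)
          rw [X.ip_zero]; exact SSm.zero_mem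
      | add w w' _ _ hw hw' =>
          show X.ip x (w + w') ∈ (SSm : Set A)
          rw [X.ip_add]; exact SSm.add_mem hw hw'
      | smul c w _ hw =>
          show X.ip x (c • w) ∈ (SSm : Set A)
          rw [X.ip_smul]; exact SSm.smul_mem _ hw
    exact closure_minimal hsub hCclosed hy
  -- Step 1
  have step1 : X.ipSet ⊆ (SSm : Set A) := by
    show closure (Submodule.span ℂ {a : A | ∃ x y, a = X.ip x y} : Set A) ⊆ _
    apply closure_minimal _ hSS_closed
    have hle : Submodule.span ℂ {a : A | ∃ x y, a = X.ip x y} ≤ SSm := by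
      rw [Submodule.span_le]
      rintro a ⟨x, y, rfl⟩
      exact claimB x y
    exact fun a ha => hle ha
  -- Step 2
  have step2 : ∀ c ∈ (SSm : Set A), ∀ (r' r : R.X), R.ip r' (R.φ c r) ∈ Y.ipSet := by
    intro c hc r' r
    rw [← hYcoe]
    have hEclosed : IsClosed ((fun a : A => R.ip r' (R.φ a r)) ⁻¹' (YJm : Set B)) :=
      hYJ_closed.preimage (R.continuous_ip_φ r' r)
    have hsub : (Submodule.span ℂ {c : A | ∃ σ σ', c = S.ip σ σ'} : Set A) ⊆
        (fun a : A => R.ip r' (R.φ a r)) ⁻¹' (YJm : Set B) := by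
      intro z hz
      induction hz using Submodule.span_induction with
      | mem w hw =>
          obtain ⟨σ, σ', rfl⟩ := hw
          show R.ip r' (R.φ (S.ip σ σ') r) ∈ (YJm : Set B)
          rw [← hu.inner]
          exact Submodule.le_topologicalClosure _ (Submodule.subset_span ⟨_, _, rfl⟩)
      | zero =>
          show R.ip r' (R.φ 0 r) ∈ (YJm : Set B)
          rw [R.φ_zero', R.ip_zero]; exact YJm.zero_mem
      | add w w' _ _ hw hw' =>
          show R.ip r' (R.φ (w + w') r) ∈ (YJm : Set B)
          rw [R.φ_add', R.ip_add]; exact YJm.add_mem hw hw'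
      | smul z w _ hw =>
          show R.ip r' (R.φ (z • w) r) ∈ (YJm : Set B)
          rw [R.φ_smul', R.ip_smul]; exact YJm.smul_mem _ hw
    have : c ∈ closure (Submodule.span ℂ {c : A | ∃ σ σ', c = S.ip σ σ'} : Set A) := by
      rw [← Submodule.topologicalClosure_coe, ← hSSm]; exact hc
    exact closure_minimal hsub hEclosed this
  -- final assembly
  intro a ha r
  have hξ := R.mem_closure_span_sm_ip (R.φ a r)
  have hmono : (Submodule.span ℂ {w : R.X | ∃ ρ ρ', w = R.sm ρ (R.ip ρ' (R.φ a r))} : Set R.X) ⊆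
      (Submodule.span ℂ {x : R.X | ∃ ζ b, b ∈ Y.ipSet ∧ x = R.sm ζ b} : Set R.X) := by
    apply Submodule.span_mono
    rintro w ⟨ρ, ρ', rfl⟩
    exact ⟨ρ, R.ip ρ' (R.φ a r), step2 a (step1 ha) ρ' r, rfl⟩
  exact closure_mono hmono hξ

end Main
end Aux

/-- with `I = span⟨X,X⟩ ⊴ A` and `J = span⟨Y,Y⟩ ⊴ B`,
if `X ≅ R ⊗_B S` and `Y ≅ S ⊗_A R` then `IR ⊆ RJ` and `JS ⊆ SI`. -/
theorem stmt11 {A B : Type} [NonUnitalCStarAlgebra A] [NonUnitalCStarAlgebra B]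
    (X : Corr A A) (Y : Corr B B) (R : Corr A B) (S : Corr B A)
    (hX : IsTensorProd R S X) (hY : IsTensorProd S R Y) :
    (∀ a ∈ X.ipSet, ∀ r, R.φ a r ∈ R.setR Y.ipSet) ∧
    (∀ b ∈ Y.ipSet, ∀ s, S.φ b s ∈ S.setR X.ipSet) :=
  ⟨main_step X Y R S hX hY, main_step Y X S R hY hX⟩
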